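/- Let n ≥ 1 and let B be a real n×n matrix. Let A be the real 2n×2n block matrix A = [[0, I], [B, 0]], where I is the n×n identity matrix and the index set of A is Fin n ⊕ Fin n. Then for every x ∈ ℝ, the matrix exponential of xA is the block matrix exp(xA) = [[C(x), S(x)], [B·S(x), C(x)]], where C(x) = Σ_{m=0}^{∞} (x^{2m}/(2m)!) Bᵐ and S(x) = Σ_{m=0}^{∞} (x^{2m+1}/(2m+1)!) Bᵐ, both series converging absolutely in the normed algebra of n×n real matrices. -/

import Mathlib

open scoped Nat

attribute [local instance] Matrix.linftyOpNormedRing Matrix.linftyOpNormedAlgebra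

/-- `C(x) = ∑_{m} (x^{2m}/(2m)!) Bᵐ`, i.e. `cosh (√B x)` as an everywhere-convergent power
series in `B`. -/
noncomputable def coshMat {n : ℕ} (B : Matrix (Fin n) (Fin n) ℝ) (x : ℝ) :
    Matrix (Fin n) (Fin n) ℝ :=
  ∑' m : ℕ, (x ^ (2 * m) / (2 * m) ! : ℝ) • B ^ m

/-- `S(x) = ∑_{m} (x^{2m+1}/(2m+1)!) Bᵐ`, i.e. `B^{-1/2} sinh (√B x)` as an
everywhere-convergent power series in `B`. -/
noncomputable def sinhMat {n : ℕ} (B : Matrix (Fin n) (Fin n) ℝ) (x : ℝ) :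
    Matrix (Fin n) (Fin n) ℝ :=
  ∑' m : ℕ, (x ^ (2 * m + 1) / (2 * m + 1) ! : ℝ) • B ^ m

section aux
variable {n : ℕ} (B : Matrix (Fin n) (Fin n) ℝ)

def Amat : Matrix (Fin n ⊕ Fin n) (Fin n ⊕ Fin n) ℝ :=
  Matrix.fromBlocks 0 1 B (0 : Matrix (Fin n) (Fin n) ℝ)

lemma Asq : Amat B ^ 2 = Matrix.fromBlocks B 0 0 B := by
  rw [pow_two, Amat]
  simp [Matrix.fromBlocks_multiply]

lemma Apow_even (m : ℕ) : Amat B ^ (2 * m) = Matrix.fromBlocks (B ^ m) 0 0 (B ^ m) := by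
  induction m with
  | zero => simp [Matrix.fromBlocks_one]
  | succ m ih =>
    have : 2 * (m + 1) = 2 * m + 2 := by ring
    rw [this, pow_add, ih, Asq, Matrix.fromBlocks_multiply]
    simp [pow_succ]

lemma Apow_odd (m : ℕ) :
    Amat B ^ (2 * m + 1) = Matrix.fromBlocks 0 (B ^ m) (B ^ (m + 1)) 0 := by
  rw [pow_add, Apow_even, pow_one, Amat, Matrix.fromBlocks_multiply]
  simp [pow_succ, mul_comm]

end aux

set_option maxHeartbeats 1000000 in
/-- For the block matrix `A = [[0, I], [B, 0]]` (indexed by `Fin n ⊕ Fin n`)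
and every `x ∈ ℝ`, the series defining `C(x)` and `S(x)` converge absolutely in the normed
algebra of `n × n` real matrices, and
`exp (x A) = [[C(x), S(x)], [B ⬝ S(x), C(x)]]`. -/
theorem stmt11 (n : ℕ) (hn : 1 ≤ n) (B : Matrix (Fin n) (Fin n) ℝ) (x : ℝ) :
    (Summable fun m : ℕ => ‖(x ^ (2 * m) / (2 * m) ! : ℝ) • B ^ m‖) ∧
    (Summable fun m : ℕ => ‖(x ^ (2 * m + 1) / (2 * m + 1) ! : ℝ) • B ^ m‖) ∧
    NormedSpace.exp (x • Matrix.fromBlocks 0 1 B (0 : Matrix (Fin n) (Fin n) ℝ)) =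
      Matrix.fromBlocks (coshMat B x) (sinhMat B x) (B * sinhMat B x) (coshMat B x) := by
  haveI : Nonempty (Fin n) := ⟨⟨0, hn⟩⟩
  set A : Matrix (Fin n ⊕ Fin n) (Fin n ⊕ Fin n) ℝ := Matrix.fromBlocks 0 1 B (0 : Matrix (Fin n) (Fin n) ℝ) with hA
  -- summability bounds
  have hB : ∀ m : ℕ, ‖B ^ m‖ ≤ ‖B‖ ^ m := fun m => norm_pow_le B m
  have key : ∀ m : ℕ, |x| ^ (2 * m) * ‖B‖ ^ m = (x ^ 2 * ‖B‖) ^ m := by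
    intro m
    rw [mul_pow, pow_mul, sq_abs]
  have hsum0 : Summable fun m : ℕ => (x ^ 2 * ‖B‖) ^ m / m ! :=
    Real.summable_pow_div_factorial _
  have h1 : Summable fun m : ℕ => ‖(x ^ (2 * m) / (2 * m) ! : ℝ) • B ^ m‖ := by
    refine Summable.of_nonneg_of_le (fun m => norm_nonneg _) (fun m => ?_) hsum0
    rw [norm_smul, Real.norm_eq_abs, abs_div, abs_pow, Nat.abs_cast]
    calc |x| ^ (2 * m) / (2 * m)! * ‖B ^ m‖
        ≤ |x| ^ (2 * m) / (2 * m)! * ‖B‖ ^ m := by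
          apply mul_le_mul_of_nonneg_left (hB m)
          positivity
      _ = (x ^ 2 * ‖B‖) ^ m / (2 * m)! := by rw [div_mul_eq_mul_div, key]
      _ ≤ (x ^ 2 * ‖B‖) ^ m / m ! := by
          apply div_le_div_of_nonneg_left _ _ _
          · positivity
          · exact_mod_cast Nat.factorial_pos m
          · exact_mod_cast Nat.factorial_le (by omega)
  have h2 : Summable fun m : ℕ => ‖(x ^ (2 * m + 1) / (2 * m + 1) ! : ℝ) • B ^ m‖ := by
    refine Summable.of_nonneg_of_le (fun m => norm_nonneg _) (fun m => ?_) (hsum0.mul_left |x|)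
    rw [norm_smul, Real.norm_eq_abs, abs_div, abs_pow, Nat.abs_cast]
    calc |x| ^ (2 * m + 1) / (2 * m + 1)! * ‖B ^ m‖
        ≤ |x| ^ (2 * m + 1) / (2 * m + 1)! * ‖B‖ ^ m := by
          apply mul_le_mul_of_nonneg_left (hB m)
          positivity
      _ = |x| * ((x ^ 2 * ‖B‖) ^ m / (2 * m + 1)!) := by
          rw [pow_succ, ← key]; ring
      _ ≤ |x| * ((x ^ 2 * ‖B‖) ^ m / m !) := by
          apply mul_le_mul_of_nonneg_left _ (abs_nonneg x)
          apply div_le_div_of_nonneg_left _ _ _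
          · positivity
          · exact_mod_cast Nat.factorial_pos m
          · exact_mod_cast Nat.factorial_le (by omega)
  refine ⟨h1, h2, ?_⟩
  have s1 : HasSum (fun m : ℕ => (x ^ (2 * m) / (2 * m) ! : ℝ) • B ^ m) (coshMat B x) :=
    (h1.of_norm).hasSum
  have s2 : HasSum (fun m : ℕ => (x ^ (2 * m + 1) / (2 * m + 1) ! : ℝ) • B ^ m) (sinhMat B x) :=
    (h2.of_norm).hasSum
  let L1 : Matrix (Fin n) (Fin n) ℝ →+ Matrix (Fin n ⊕ Fin n) (Fin n ⊕ Fin n) ℝ :=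
    { toFun := fun X => Matrix.fromBlocks X 0 0 X
      map_zero' := by simp
      map_add' := fun X Y => by simp [Matrix.fromBlocks_add] }
  have hL1 : Continuous L1 :=
    continuous_id.matrix_fromBlocks continuous_const continuous_const continuous_id
  let L2 : Matrix (Fin n) (Fin n) ℝ →+ Matrix (Fin n ⊕ Fin n) (Fin n ⊕ Fin n) ℝ :=
    { toFun := fun X => Matrix.fromBlocks 0 X (B * X) 0
      map_zero' := by simp
      map_add' := fun X Y => by simp [Matrix.fromBlocks_add, mul_add] }
  have hL2 : Continuous L2 :=
    continuous_const.matrix_fromBlocks continuous_id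
      (continuous_const.matrix_mul continuous_id) continuous_const
  have hAB : A = Amat B := rfl
  have hs1 : HasSum (fun m : ℕ => (x ^ (2 * m) / (2 * m) ! : ℝ) • A ^ (2 * m))
      (Matrix.fromBlocks (coshMat B x) 0 0 (coshMat B x)) := by
    convert s1.map L1 hL1 using 1
    funext m
    show _ = Matrix.fromBlocks _ 0 0 _
    rw [hAB, Apow_even, Matrix.fromBlocks_smul, smul_zero]
    rfl
  have hs2 : HasSum (fun m : ℕ => (x ^ (2 * m + 1) / (2 * m + 1) ! : ℝ) • A ^ (2 * m + 1))
      (Matrix.fromBlocks 0 (sinhMat B x) (B * sinhMat B x) 0) := by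
    convert s2.map L2 hL2 using 1
    funext m
    show _ = Matrix.fromBlocks 0 _ (B * _) 0
    rw [hAB, Apow_odd, Matrix.fromBlocks_smul, smul_zero, mul_smul_comm, ← pow_succ']
    rfl
  have hsum : HasSum (fun k : ℕ => (x ^ k / k ! : ℝ) • A ^ k)
      (Matrix.fromBlocks (coshMat B x) (sinhMat B x) (B * sinhMat B x) (coshMat B x)) := by
    have := HasSum.even_add_odd (f := fun k : ℕ => (x ^ k / k ! : ℝ) • A ^ k) hs1 hs2
    simpa [Matrix.fromBlocks_add] using this
  have hexp : NormedSpace.exp (x • A) = ∑' k : ℕ, ((k ! : ℝ))⁻¹ • (x • A) ^ k := by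
    rw [NormedSpace.exp_eq_tsum (𝕂 := ℝ)]
  have hfun : (fun k : ℕ => ((k ! : ℝ))⁻¹ • (x • A) ^ k)
      = fun k : ℕ => (x ^ k / k ! : ℝ) • A ^ k := by
    funext k
    rw [smul_pow, smul_smul, div_eq_mul_inv, mul_comm]
  rw [hexp, hfun]
  exact hsum.tsum_eq
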